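/- For fixed x > 0, the function g(σ) = σ·H(x/σ), which equals the mean of a centered normal variable with standard deviation σ conditioned to be at least x, is strictly increasing in σ on (0,∞) and g(σ) → x as σ → 0⁺. For x = 0, g(σ) = σ·√(2/π) for all σ > 0. -/

import Mathlib

open MeasureTheory Real Set Filter

/-- Standard normal pdf. -/
noncomputable def phi (x : ℝ) : ℝ := Real.exp (-x ^ 2 / 2) / Real.sqrt (2 * Real.pi)

/-- Standard normal cdf. -/
noncomputable def Phi (x : ℝ) : ℝ := ∫ y in Set.Iic x, phi y

/-- Standard normal hazard rate. -/
noncomputable def Haz (x : ℝ) : ℝ := phi x / (1 - Phi x)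

lemma phi_pos (y : ℝ) : 0 < phi y :=
  div_pos (Real.exp_pos _) (Real.sqrt_pos.2 (by positivity))

lemma continuous_phi : Continuous phi := by
  unfold phi; fun_prop

lemma phi_eq (y : ℝ) : phi y = Real.exp (-(1/2) * y ^ 2) * (Real.sqrt (2 * Real.pi))⁻¹ := by
  rw [phi, div_eq_mul_inv]; ring_nf

lemma integrable_phi : Integrable phi := by
  have := (integrable_exp_neg_mul_sq (by norm_num : (0:ℝ) < 1/2)).mul_const
    (Real.sqrt (2 * Real.pi))⁻¹
  exact this.congr (by filter_upwards with y; rw [phi_eq])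

lemma integral_phi : ∫ y, phi y = 1 := by
  have h := integral_gaussian (1/2 : ℝ)
  have h2 : √(Real.pi / (1/2)) = √(2 * Real.pi) := by norm_num [mul_comm]
  have hs : (0:ℝ) < √(2 * Real.pi) := Real.sqrt_pos.2 (by positivity)
  calc ∫ y, phi y = (∫ y, Real.exp (-(1/2) * y ^ 2)) * (√(2 * Real.pi))⁻¹ := by
        rw [← integral_mul_const]; exact integral_congr_ae (by filter_upwards with y; rw [phi_eq])
    _ = 1 := by rw [h, h2, mul_inv_cancel₀ hs.ne']

noncomputable def S (t : ℝ) : ℝ := ∫ y in Set.Ioi t, phi y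

lemma one_sub_Phi (t : ℝ) : 1 - Phi t = S t := by
  have := intervalIntegral.integral_Iic_add_Ioi (b := t) integrable_phi.integrableOn integrable_phi.integrableOn
  rw [integral_phi] at this
  rw [Phi, S]; linarith

lemma S_pos (t : ℝ) : 0 < S t := by
  rw [S, setIntegral_pos_iff_support_of_nonneg_ae]
  · have : Function.support phi ∩ Ioi t = Ioi t := by
      rw [inter_eq_right]; intro y _; exact (phi_pos y).ne'
    rw [this, Real.volume_Ioi]; exact ENNReal.zero_lt_top
  · filter_upwards with y using (phi_pos y).le
  · exact integrable_phi.integrableOn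

lemma hasDerivAt_Phi (t : ℝ) : HasDerivAt Phi (phi t) t := by
  have heq : Phi = fun u => Phi 0 + ∫ y in (0:ℝ)..u, phi y := by
    funext u
    rw [← intervalIntegral.integral_Iic_sub_Iic integrable_phi.integrableOn
      integrable_phi.integrableOn]
    simp [Phi]
  rw [heq]
  exact (intervalIntegral.integral_hasDerivAt_right
    (integrable_phi.intervalIntegrable)
    (continuous_phi.stronglyMeasurableAtFilter _ _)
    continuous_phi.continuousAt).const_add _

lemma hasDerivAt_S (t : ℝ) : HasDerivAt S (-phi t) t := by
  have heq : S = fun u => 1 - Phi u := by funext u; rw [← one_sub_Phi]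
  rw [heq]
  simpa using (hasDerivAt_Phi t).const_sub 1

lemma tendsto_phi_atTop : Tendsto phi atTop (nhds 0) := by
  have : Tendsto (fun y : ℝ => -y ^ 2 / 2) atTop atBot := by
    apply Filter.Tendsto.atBot_div_const (by norm_num)
    exact tendsto_neg_atBot_iff.2 (tendsto_pow_atTop (by norm_num))
  have h := (Real.tendsto_exp_atBot.comp this).div_const (Real.sqrt (2 * Real.pi))
  rw [show phi = fun y => Real.exp (-y ^ 2 / 2) / Real.sqrt (2 * Real.pi) from rfl]
  simpa [Function.comp] using h

lemma hasDerivAt_neg_phi (y : ℝ) : HasDerivAt (fun y => -phi y) (y * phi y) y := by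
  have h1 : HasDerivAt (fun y : ℝ => -y ^ 2 / 2) (-y) y := by
    have := ((hasDerivAt_pow 2 y).neg.div_const 2)
    refine this.congr_deriv ?_
    simp; ring
  have h2 : HasDerivAt phi (-y * phi y) y := by
    have := (h1.exp).div_const (Real.sqrt (2 * Real.pi))
    refine this.congr_deriv ?_
    rw [phi]; ring
  exact h2.neg.congr_deriv (by ring)

lemma integral_y_phi {t : ℝ} (ht : 0 ≤ t) : ∫ y in Ioi t, y * phi y = phi t := by
  have := integral_Ioi_of_hasDerivAt_of_nonneg' (a := t) (g := fun y => -phi y)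
    (g' := fun y => y * phi y) (l := 0)
    (fun y _ => hasDerivAt_neg_phi y)
    (fun y hy => mul_nonneg (ht.trans (le_of_lt hy)) (phi_pos y).le)
    (by simpa using tendsto_phi_atTop.neg)
  simpa using this

lemma S_le_bound {t : ℝ} (ht : 0 < t) : S t ≤ phi t / t := by
  have h1 : S t ≤ ∫ y in Ioi t, (y / t) * phi y := by
    rw [S]
    apply setIntegral_mono_on integrable_phi.integrableOn
    · have : IntegrableOn (fun y => y * phi y) (Ioi t) := by
        have := integrableOn_Ioi_deriv_of_nonneg' (a := t) (g := fun y => -phi y)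
          (g' := fun y => y * phi y) (l := 0)
          (fun y _ => hasDerivAt_neg_phi y)
          (fun y hy => mul_nonneg (ht.le.trans (le_of_lt hy)) (phi_pos y).le)
          (by simpa using tendsto_phi_atTop.neg)
        exact this
      exact (this.div_const t).congr (ae_of_all _ fun y => by ring)
    · exact measurableSet_Ioi
    · intro y hy
      have h1 : (1:ℝ) ≤ y / t := (one_le_div ht).2 (le_of_lt hy)
      nlinarith [phi_pos y]
  have h2 : ∫ y in Ioi t, (y / t) * phi y = phi t / t := by
    rw [show (fun y => (y / t) * phi y) = fun y => (y * phi y) / t by funext y; ring,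
      integral_div, integral_y_phi ht.le]
  linarith

lemma hasDerivAt_phi (y : ℝ) : HasDerivAt phi (-y * phi y) y := by
  have h := hasDerivAt_neg_phi y
  exact (h.neg.congr_deriv (by ring)).congr_of_eventuallyEq (Eventually.of_forall fun z => by simp)

lemma tendsto_S_atTop : Tendsto S atTop (nhds 0) := by
  apply tendsto_of_tendsto_of_tendsto_of_le_of_le' (g := fun _ => (0:ℝ))
    (h := fun t => phi t / t) tendsto_const_nhds
  · have h1 : Tendsto (fun t : ℝ => t⁻¹) atTop (nhds 0) := tendsto_inv_atTop_zero
    simpa [div_eq_mul_inv] using tendsto_phi_atTop.mul h1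
  · exact Eventually.of_forall fun t => (S_pos t).le
  · filter_upwards [eventually_gt_atTop 0] with t ht using S_le_bound ht

lemma tendsto_Phi_atTop : Tendsto Phi atTop (nhds 1) := by
  have : Phi = fun t => 1 - S t := by funext t; have := one_sub_Phi t; linarith
  rw [this]
  simpa using (tendsto_const_nhds (x := (1:ℝ)) (f := atTop)).sub tendsto_S_atTop

lemma hasDerivAt_F (y : ℝ) :
    HasDerivAt (fun y => Phi y + y * phi y / (1 + y ^ 2))
      (phi y * (2 / (1 + y ^ 2) ^ 2)) y := by
  have hden : (1 + y ^ 2) ≠ 0 := by positivity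
  have h1 : HasDerivAt (fun y : ℝ => y * phi y) (1 * phi y + y * (-y * phi y)) y :=
    (hasDerivAt_id y).mul (hasDerivAt_phi y)
  have h2 : HasDerivAt (fun y : ℝ => 1 + y ^ 2) (0 + 2 * y ^ 1) y :=
    (hasDerivAt_const y 1).add (hasDerivAt_pow 2 y)
  have h3 := h1.div h2 hden
  have h4 := (hasDerivAt_Phi y).add h3
  refine h4.congr_deriv ?_
  field_simp
  ring

lemma S_lt_bound (t : ℝ) : t * phi t / (1 + t ^ 2) < S t := by
  have hFtendsto : Tendsto (fun y => Phi y + y * phi y / (1 + y ^ 2)) atTop (nhds 1) := by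
    have h2 : Tendsto (fun y : ℝ => y * phi y / (1 + y ^ 2)) atTop (nhds 0) := by
      apply tendsto_of_tendsto_of_tendsto_of_le_of_le' (g := fun _ => (0:ℝ))
        (h := phi) tendsto_const_nhds tendsto_phi_atTop
      · filter_upwards [eventually_ge_atTop 0] with y hy
        exact div_nonneg (mul_nonneg hy (phi_pos y).le) (by positivity)
      · filter_upwards [eventually_ge_atTop 0] with y hy
        rw [div_le_iff₀ (by positivity)]
        nlinarith [phi_pos y, sq_nonneg (y - 1)]
    simpa using tendsto_Phi_atTop.add h2
  have hpos : ∀ y ∈ Ioi t, 0 ≤ phi y * (2 / (1 + y ^ 2) ^ 2) := fun y _ => mul_nonneg (phi_pos y).le (by positivity)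
  have hint := integral_Ioi_of_hasDerivAt_of_nonneg' (a := t)
    (fun y _ => hasDerivAt_F y) hpos hFtendsto
  have hintble := integrableOn_Ioi_deriv_of_nonneg' (a := t)
    (fun y _ => hasDerivAt_F y) hpos hFtendsto
  have hgt : 0 < ∫ y in Ioi t, phi y * (2 / (1 + y ^ 2) ^ 2) := by
    rw [setIntegral_pos_iff_support_of_nonneg_ae (ae_of_all _ fun y => mul_nonneg (phi_pos y).le (by positivity)) hintble]
    have : Function.support (fun y => phi y * (2 / (1 + y ^ 2) ^ 2)) ∩ Ioi t = Ioi t := by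
      rw [inter_eq_right]
      intro y _
      have h1 : (0:ℝ) < phi y * (2 / (1 + y ^ 2) ^ 2) :=
        mul_pos (phi_pos y) (by positivity)
      exact h1.ne'
    rw [this, Real.volume_Ioi]
    exact ENNReal.zero_lt_top
  rw [hint] at hgt
  have := one_sub_Phi t
  linarith

noncomputable def uu (t : ℝ) : ℝ := t * S t * Real.exp (t ^ 2 / 2)

lemma strictMono_uu : StrictMono uu := by
  apply strictMono_of_deriv_pos
  intro t
  have hexp : HasDerivAt (fun t : ℝ => Real.exp (t ^ 2 / 2)) (Real.exp (t ^ 2 / 2) * t) t := by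
    have h1 : HasDerivAt (fun t : ℝ => t ^ 2 / 2) t t := by
      simpa using ((hasDerivAt_pow 2 t).div_const 2)
    simpa using h1.exp
  have h1 : HasDerivAt (fun t : ℝ => t * S t) (1 * S t + t * (-phi t)) t :=
    (hasDerivAt_id t).mul (hasDerivAt_S t)
  have h2 : HasDerivAt uu
      ((1 * S t + t * (-phi t)) * Real.exp (t ^ 2 / 2)
        + t * S t * (Real.exp (t ^ 2 / 2) * t)) t := h1.mul hexp
  rw [h2.deriv]
  have hkey := S_lt_bound t
  have hS := S_pos t
  have he : (0:ℝ) < Real.exp (t ^ 2 / 2) := Real.exp_pos _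
  have h3 : t * phi t < (1 + t ^ 2) * S t := by
    rw [div_lt_iff₀ (by positivity : (0:ℝ) < 1 + t ^ 2)] at hkey
    linarith
  nlinarith

lemma uu_pos {t : ℝ} (ht : 0 < t) : 0 < uu t :=
  mul_pos (mul_pos ht (S_pos t)) (Real.exp_pos _)

lemma haz_formula {x σ : ℝ} (hx : 0 < x) (hσ : 0 < σ) :
    σ * Haz (x / σ) = x / (Real.sqrt (2 * Real.pi) * uu (x / σ)) := by
  set t := x / σ with htdef
  have ht : 0 < t := div_pos hx hσ
  have hS := S_pos t
  have hsq : (0:ℝ) < Real.sqrt (2 * Real.pi) := Real.sqrt_pos.2 (by positivity)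
  have he : (0:ℝ) < Real.exp (t ^ 2 / 2) := Real.exp_pos _
  have hxt : x = σ * t := by rw [htdef]; field_simp
  rw [Haz, one_sub_Phi, uu, phi]
  rw [hxt, neg_div, Real.exp_neg]
  field_simp

lemma sqrt2pi_phi_exp (t : ℝ) : Real.sqrt (2 * Real.pi) * phi t * Real.exp (t ^ 2 / 2) = 1 := by
  have hsq : (0:ℝ) < Real.sqrt (2 * Real.pi) := Real.sqrt_pos.2 (by positivity)
  rw [phi]
  field_simp
  rw [← Real.exp_add]
  norm_num

lemma uu_upper {t : ℝ} (ht : 0 < t) : Real.sqrt (2 * Real.pi) * uu t ≤ 1 := by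
  have h1 := S_le_bound ht
  have hsq : (0:ℝ) < Real.sqrt (2 * Real.pi) := Real.sqrt_pos.2 (by positivity)
  have he : (0:ℝ) < Real.exp (t ^ 2 / 2) := Real.exp_pos _
  have h2 : uu t ≤ phi t * Real.exp (t ^ 2 / 2) := by
    rw [uu]
    have : t * S t ≤ phi t := by
      rw [le_div_iff₀ ht] at h1; linarith [mul_comm t (S t)]
    nlinarith
  calc Real.sqrt (2 * Real.pi) * uu t ≤ Real.sqrt (2 * Real.pi) * (phi t * Real.exp (t ^ 2 / 2)) := by
        nlinarith
    _ = 1 := by rw [← mul_assoc]; exact sqrt2pi_phi_exp t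
  
lemma uu_lower {t : ℝ} (ht : 0 < t) : t ^ 2 / (1 + t ^ 2) ≤ Real.sqrt (2 * Real.pi) * uu t := by
  have h1 := S_lt_bound t
  have hsq : (0:ℝ) < Real.sqrt (2 * Real.pi) := Real.sqrt_pos.2 (by positivity)
  have he : (0:ℝ) < Real.exp (t ^ 2 / 2) := Real.exp_pos _
  have hden : (0:ℝ) < 1 + t ^ 2 := by positivity
  have h2 : t ^ 2 / (1 + t ^ 2) = Real.sqrt (2 * Real.pi) *
      (t * (t * phi t / (1 + t ^ 2)) * Real.exp (t ^ 2 / 2)) := by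
    rw [show Real.sqrt (2 * Real.pi) * (t * (t * phi t / (1 + t ^ 2)) * Real.exp (t ^ 2 / 2))
      = (t ^ 2 / (1 + t ^ 2)) * (Real.sqrt (2 * Real.pi) * phi t * Real.exp (t ^ 2 / 2)) by ring,
      sqrt2pi_phi_exp, mul_one]
  rw [h2, uu]
  gcongr


lemma Phi_zero : Phi 0 = 1 / 2 := by
  have hsym : Phi 0 = S 0 := by
    rw [Phi, S]
    have := integral_comp_neg_Iic (0 : ℝ) phi
    simp only [neg_zero] at this
    rw [← this]
    congr 1
    funext y
    simp [phi, neg_sq]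
  have := one_sub_Phi 0
  linarith

lemma haz_zero : Haz 0 = Real.sqrt (2 / Real.pi) := by
  have hsq : (0:ℝ) < Real.sqrt (2 * Real.pi) := Real.sqrt_pos.2 (by positivity)
  have h1 : Haz 0 = 2 * phi 0 := by
    rw [Haz, Phi_zero, show (1:ℝ) - 1/2 = (2:ℝ)⁻¹ by norm_num, div_inv_eq_mul]; ring
  have h2 : phi 0 = 1 / Real.sqrt (2 * Real.pi) := by simp [phi]
  have h3 : Real.sqrt (2 / Real.pi) * Real.sqrt (2 * Real.pi) = 2 := by
    rw [← Real.sqrt_mul (by positivity)]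
    rw [show (2 / Real.pi) * (2 * Real.pi) = 4 by field_simp; ring]
    rw [show (4:ℝ) = 2 ^ 2 by norm_num, Real.sqrt_sq (by norm_num)]
  rw [h1, h2, mul_one_div, div_eq_iff hsq.ne']
  exact h3.symm


theorem stmt5 (x : ℝ) (hx : 0 ≤ x) :
    (0 < x →
      StrictMonoOn (fun σ => σ * Haz (x / σ)) (Set.Ioi 0) ∧
      Tendsto (fun σ => σ * Haz (x / σ)) (nhdsWithin 0 (Set.Ioi 0)) (nhds x)) ∧
    (x = 0 → ∀ σ : ℝ, 0 < σ → σ * Haz (x / σ) = σ * Real.sqrt (2 / Real.pi)) := by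
  have hsq : (0:ℝ) < Real.sqrt (2 * Real.pi) := Real.sqrt_pos.2 (by positivity)
  constructor
  · intro hx0
    constructor
    · intro σ1 h1 σ2 h2 h12
      simp only
      rw [haz_formula hx0 h1, haz_formula hx0 h2]
      have ht2 : 0 < x / σ2 := div_pos hx0 h2
      have hlt : x / σ2 < x / σ1 := by
        apply div_lt_div_of_pos_left hx0 h1 h12
      have hu := strictMono_uu hlt
      apply div_lt_div_of_pos_left hx0 (mul_pos hsq (uu_pos ht2))
      exact mul_lt_mul_of_pos_left hu hsq
    · have hcomp : Tendsto (fun σ : ℝ => x / σ) (nhdsWithin 0 (Set.Ioi 0)) atTop := by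
        simp only [div_eq_mul_inv]
        exact tendsto_inv_nhdsGT_zero.const_mul_atTop hx0
      have hv : Tendsto (fun σ => Real.sqrt (2 * Real.pi) * uu (x / σ))
          (nhdsWithin 0 (Set.Ioi 0)) (nhds 1) := by
        apply tendsto_of_tendsto_of_tendsto_of_le_of_le'
          (g := fun σ => (x / σ) ^ 2 / (1 + (x / σ) ^ 2)) (h := fun _ => (1:ℝ))
        · have hL : Tendsto (fun t : ℝ => t ^ 2 / (1 + t ^ 2)) atTop (nhds 1) := by
            have h0 : Tendsto (fun t : ℝ => 1 / (1 + t ^ 2)) atTop (nhds 0) := by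
              simp only [one_div]
              exact tendsto_inv_atTop_zero.comp
                (tendsto_atTop_add_const_left _ 1 (tendsto_pow_atTop (by norm_num)))
            have h1 := (tendsto_const_nhds (x := (1:ℝ)) (f := atTop)).sub h0
            rw [sub_zero] at h1
            apply h1.congr
            intro t
            have : (1:ℝ) + t ^ 2 ≠ 0 := by positivity
            field_simp
            ring
          exact hL.comp hcomp
        · exact tendsto_const_nhds
        · filter_upwards [self_mem_nhdsWithin] with σ hσ
          exact uu_lower (div_pos hx0 hσ)
        · filter_upwards [self_mem_nhdsWithin] with σ hσ
          exact uu_upper (div_pos hx0 hσ)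
      have hdiv := (tendsto_const_nhds (x := x)
        (f := nhdsWithin 0 (Set.Ioi 0))).div hv one_ne_zero
      rw [div_one] at hdiv
      apply Tendsto.congr' _ hdiv
      filter_upwards [self_mem_nhdsWithin] with σ hσ
      exact (haz_formula hx0 hσ).symm
  · intro hx0 σ hσ
    subst hx0
    rw [zero_div, haz_zero]
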